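/- Let μ be a probability measure on [0,2π) whose support is infinite, and let φ_N be its N-th orthonormal polynomial. Then φ_N(e^{iθ}) ≠ 0 for all θ, the measure dμ_N = dθ / (2π |φ_N(e^{iθ})|²) is a probability measure, and the trigonometric moments of μ_N and μ of order up to N coincide: ∫₀^{2π} e^{−ikθ} dμ_N(θ) = ∫₀^{2π} e^{−ikθ} dμ(θ) for every integer k with |k| ≤ N. -/

import Mathlib

open MeasureTheory Polynomial Real Set

noncomputable section

/-- `φ` is the `n`-th orthonormal polynomial for the measure `μ`
(viewed as a measure on the unit circle via `θ ↦ exp (i θ)`). -/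
def IsOrthonormalPolynomial (μ : Measure ℝ) (n : ℕ) (φ : Polynomial ℂ) : Prop :=
  φ.degree = (n : WithBot ℕ) ∧ φ.leadingCoeff.im = 0 ∧ 0 < φ.leadingCoeff.re ∧
  (∀ m : ℕ, m < n →
    ∫ θ : ℝ, φ.eval (Complex.exp (θ * Complex.I)) *
      Complex.exp (-((m : ℝ) * θ : ℝ) * Complex.I) ∂μ = 0) ∧
  ∫ θ : ℝ, ‖φ.eval (Complex.exp (θ * Complex.I))‖ ^ 2 ∂μ = 1

/-- the support of `μ` is infinite, i.e. `μ` is not concentrated on a finite set. -/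
def HasInfiniteSupport (μ : Measure ℝ) : Prop := ∀ s : Finset ℝ, μ ((s : Set ℝ))ᶜ ≠ 0

/-- The Bernstein–Szegő measure `dθ/(2π |P(e^{iθ})|²)` of a polynomial `P`. -/
def bsMeasure (P : Polynomial ℂ) : Measure ℝ :=
  (volume.restrict (Set.Ico (0 : ℝ) (2 * π))).withDensity
    (fun θ => ENNReal.ofReal (1 / (2 * π * ‖P.eval (Complex.exp (θ * Complex.I))‖ ^ 2)))


namespace BSaux
open Complex

section
def E (r : ℝ) : ℂ := Complex.exp (r * Complex.I)

lemma E_norm (r : ℝ) : ‖E r‖ = 1 := by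
  rw [E]; exact Complex.norm_exp_ofReal_mul_I r

lemma E_mem_sphere (r : ℝ) : E r ∈ Metric.sphere (0:ℂ) 1 := by
  rw [mem_sphere_zero_iff_norm]; exact E_norm r

lemma E_ne_zero (r : ℝ) : E r ≠ 0 := Complex.exp_ne_zero _

lemma E_add (a b : ℝ) : E (a + b) = E a * E b := by
  rw [E, E, E, Complex.ofReal_add, add_mul, Complex.exp_add]

lemma E_zero : E 0 = 1 := by simp [E]

lemma E_conj (r : ℝ) : (starRingEnd ℂ) (E r) = E (-r) := by
  rw [E, E, ← Complex.exp_conj]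
  congr 1
  simp [Complex.conj_I]

lemma E_pow (r : ℝ) (n : ℕ) : (E r) ^ n = E (n * r) := by
  rw [E, E, ← Complex.exp_nat_mul]
  congr 1
  push_cast
  ring

lemma E_mul_conj (r : ℝ) : E r * (starRingEnd ℂ) (E r) = 1 := by
  rw [E_conj, ← E_add]
  simp [E_zero]

lemma continuous_E : Continuous E :=
  Complex.continuous_exp.comp (Complex.continuous_ofReal.mul continuous_const)

lemma integrable_comp (ν : Measure ℝ) [IsFiniteMeasure ν] {f : ℂ → ℂ}
    (hf : Continuous f) : Integrable (fun θ => f (E θ)) ν := by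
  obtain ⟨C, hC⟩ := (isCompact_sphere (0:ℂ) 1).exists_bound_of_continuousOn hf.continuousOn
  exact (integrable_const C).mono' ((hf.comp continuous_E).aestronglyMeasurable)
    (ae_of_all _ fun θ => hC _ (E_mem_sphere θ))

lemma eval_E (P : Polynomial ℂ) {n : ℕ} (hn : P.natDegree < n) (θ : ℝ) :
    P.eval (E θ) = ∑ j ∈ Finset.range n, P.coeff j * E (j * θ) := by
  rw [Polynomial.eval_eq_sum_range' hn]
  exact Finset.sum_congr rfl fun j _ => by rw [E_pow]

lemma conj_eval_E (P : Polynomial ℂ) {n : ℕ} (hn : P.natDegree < n) (θ : ℝ) :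
    (starRingEnd ℂ) (P.eval (E θ)) =
      ∑ j ∈ Finset.range n, (starRingEnd ℂ) (P.coeff j) * E (-(j * θ)) := by
  rw [eval_E P hn, map_sum]
  exact Finset.sum_congr rfl fun j _ => by rw [map_mul, E_conj]

end

lemma E_def (r : ℝ) : E r = Complex.exp (r * Complex.I) := rfl

section
variable (φ : Polynomial ℂ) (N : ℕ)

/-- the reversed-conjugated polynomial `φ*`. -/
def phs : Polynomial ℂ :=
  ∑ j ∈ Finset.range (N+1), Polynomial.C ((starRingEnd ℂ) (φ.coeff (N - j))) * X ^ j

lemma phs_natDegree_le : (phs φ N).natDegree ≤ N := by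
  refine Polynomial.natDegree_sum_le_of_forall_le _ _ fun j hj => ?_
  refine le_trans (Polynomial.natDegree_C_mul_le _ _) ?_
  simpa using Nat.lt_succ_iff.mp (Finset.mem_range.mp hj)

lemma phs_eval_zero : (phs φ N).eval 0 = (starRingEnd ℂ) (φ.coeff N) := by
  rw [phs, Polynomial.eval_finset_sum]
  rw [Finset.sum_eq_single 0]
  · simp
  · intro j _ hj; simp [zero_pow hj]
  · simp

lemma phs_eval_E (hnd : φ.natDegree = N) (θ : ℝ) :
    (phs φ N).eval (E θ) = E (N * θ) * (starRingEnd ℂ) (φ.eval (E θ)) := by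
  rw [phs, Polynomial.eval_finset_sum]
  have h1 : ∀ j ∈ Finset.range (N+1),
      (Polynomial.C ((starRingEnd ℂ) (φ.coeff (N - j))) * X ^ j).eval (E θ)
        = (starRingEnd ℂ) (φ.coeff (N - j)) * E (j * θ) := by
    intro j _; simp [E_pow]
  rw [Finset.sum_congr rfl h1]
  rw [conj_eval_E φ (show φ.natDegree < N+1 by omega), Finset.mul_sum]
  rw [← Finset.sum_range_reflect]
  refine Finset.sum_congr rfl fun j hj => ?_
  have hj' : j ≤ N := Nat.lt_succ_iff.mp (Finset.mem_range.mp hj)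
  have : (N : ℝ) - j = ((N - j : ℕ) : ℝ) := by
    push_cast [Nat.cast_sub hj']; ring
  have h2 : N + 1 - 1 - j = N - j := by omega
  rw [h2, Nat.sub_sub_self hj', mul_comm (E (↑N*θ)), mul_assoc, ← E_add]
  congr 2
  push_cast [Nat.cast_sub hj']
  ring

lemma phs_eval_of_ne_zero {z : ℂ} (hz : z ≠ 0) (hnd : φ.natDegree = N) :
    (phs φ N).eval z = z ^ N * (starRingEnd ℂ) (φ.eval (((starRingEnd ℂ) z)⁻¹)) := by
  rw [phs, Polynomial.eval_finset_sum]
  have h1 : ∀ j ∈ Finset.range (N+1),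
      (Polynomial.C ((starRingEnd ℂ) (φ.coeff (N - j))) * X ^ j).eval z
        = (starRingEnd ℂ) (φ.coeff (N - j)) * z ^ j := by
    intro j _; simp
  rw [Finset.sum_congr rfl h1]
  rw [Polynomial.eval_eq_sum_range' (by omega : φ.natDegree < N + 1), map_sum, Finset.mul_sum]
  rw [← Finset.sum_range_reflect]
  refine Finset.sum_congr rfl fun j hj => ?_
  have hj' : j ≤ N := Nat.lt_succ_iff.mp (Finset.mem_range.mp hj)
  have h2 : N + 1 - 1 - j = N - j := by omega
  rw [h2, Nat.sub_sub_self hj']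
  simp only [map_mul, map_pow, map_inv₀, Complex.conj_conj, inv_pow]
  rw [eq_comm, mul_comm, mul_assoc]
  congr 1
  rw [inv_mul_eq_iff_eq_mul₀ (pow_ne_zero _ hz), ← pow_add, Nat.add_sub_cancel' hj']

end
section
lemma E_neg_nat (j : ℕ) (θ : ℝ) : E (-(j * θ)) = ((starRingEnd ℂ) (E θ)) ^ j := by
  rw [E_conj, E_pow]; congr 1; ring

lemma mul_conj_self (z : ℂ) : z * (starRingEnd ℂ) z = ((‖z‖^2 : ℝ) : ℂ) := by
  rw [Complex.mul_conj, Complex.normSq_eq_norm_sq]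

variable (φ : Polynomial ℂ) (N : ℕ) (ν : Measure ℝ) [IsFiniteMeasure ν]

/-- integrability of `P(e^{iθ}) e^{-ijθ}` -/
lemma integrable_poly_exp (P : Polynomial ℂ) (j : ℕ) :
    Integrable (fun θ => P.eval (E θ) * E (-(j * θ))) ν := by
  have : (fun θ => P.eval (E θ) * E (-(j * θ)))
      = fun θ => (fun z => P.eval z * ((starRingEnd ℂ) z) ^ j) (E θ) := by
    funext θ; rw [E_neg_nat]
  rw [this]
  exact integrable_comp ν (((Polynomial.continuous P).mul (Complex.continuous_conj.pow j)))

/-- orthogonality against conjugates of low-degree polynomials -/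
lemma orth_conj (horth : ∀ m : ℕ, m < N →
      ∫ θ, φ.eval (E θ) * E (-(m * θ)) ∂ν = 0)
    (q : Polynomial ℂ) (hq : q.natDegree < N) :
    ∫ θ, φ.eval (E θ) * (starRingEnd ℂ) (q.eval (E θ)) ∂ν = 0 := by
  have hpt : ∀ θ : ℝ, φ.eval (E θ) * (starRingEnd ℂ) (q.eval (E θ))
      = ∑ j ∈ Finset.range N, (starRingEnd ℂ) (q.coeff j) *
          (φ.eval (E θ) * E (-(j * θ))) := by
    intro θ
    rw [conj_eval_E q hq, Finset.mul_sum]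
    exact Finset.sum_congr rfl fun j _ => by ring
  rw [show (fun θ => φ.eval (E θ) * (starRingEnd ℂ) (q.eval (E θ)))
      = fun θ => ∑ j ∈ Finset.range N, (starRingEnd ℂ) (q.coeff j) *
          (φ.eval (E θ) * E (-(j * θ))) from funext hpt]
  rw [integral_finset_sum _ fun j _ => (integrable_poly_exp ν φ j).const_mul _]
  refine Finset.sum_eq_zero fun j hj => ?_
  rw [integral_const_mul, horth j (Finset.mem_range.mp hj), mul_zero]

lemma roots_in_disk (haN : φ.coeff N ≠ 0) (hnd : φ.natDegree = N)
    (horth : ∀ m : ℕ, m < N → ∫ θ, φ.eval (E θ) * E (-(m * θ)) ∂ν = 0)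
    (hnormC : ∫ θ, φ.eval (E θ) * (starRingEnd ℂ) (φ.eval (E θ)) ∂ν = 1) :
    ∀ z : ℂ, φ.eval z = 0 → ‖z‖ < 1 := by
  intro z0 hz0
  by_contra hge
  push_neg at hge
  have hφne : φ ≠ 0 := fun h => haN (by simp [h])
  set q := φ /ₘ (X - Polynomial.C z0) with hqdef
  have hfac : (X - Polynomial.C z0) * q = φ :=
    mul_divByMonic_eq_iff_isRoot.mpr hz0
  have hqne : q ≠ 0 := by
    intro h; rw [h, mul_zero] at hfac; exact hφne hfac.symm
  have hdegq : q.natDegree < N := by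
    have h1 : φ.natDegree = 1 + q.natDegree := by
      rw [← hfac, Polynomial.natDegree_mul (Polynomial.X_sub_C_ne_zero z0) hqne,
        Polynomial.natDegree_X_sub_C]
    omega
  -- pointwise identity
  have hpt : ∀ θ : ℝ,
      q.eval (E θ) * (starRingEnd ℂ) (q.eval (E θ))
        = φ.eval (E θ) * (starRingEnd ℂ) (φ.eval (E θ))
          + (starRingEnd ℂ) z0 * (φ.eval (E θ) * (starRingEnd ℂ) (q.eval (E θ)))
          + z0 * (q.eval (E θ) * (starRingEnd ℂ) (φ.eval (E θ)))
          + (z0 * (starRingEnd ℂ) z0) * (q.eval (E θ) * (starRingEnd ℂ) (q.eval (E θ))) := by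
    intro θ
    have h1 : E θ * q.eval (E θ) = φ.eval (E θ) + z0 * q.eval (E θ) := by
      have := congrArg (Polynomial.eval (E θ)) hfac
      simp only [Polynomial.eval_mul, Polynomial.eval_sub, Polynomial.eval_X,
        Polynomial.eval_C] at this
      rw [← this]; ring
    have h2 : q.eval (E θ) * (starRingEnd ℂ) (q.eval (E θ))
        = (E θ * q.eval (E θ)) * (starRingEnd ℂ) (E θ * q.eval (E θ)) := by
      rw [map_mul, show (E θ * q.eval (E θ)) * ((starRingEnd ℂ) (E θ) * (starRingEnd ℂ) (q.eval (E θ)))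
        = (E θ * (starRingEnd ℂ) (E θ)) * (q.eval (E θ) * (starRingEnd ℂ) (q.eval (E θ))) from by ring,
        E_mul_conj, one_mul]
    conv_lhs => rw [h2, h1]
    simp only [map_add, map_mul]
    ring
  -- integrate
  have hint_qq : Integrable (fun θ => q.eval (E θ) * (starRingEnd ℂ) (q.eval (E θ))) ν :=
    integrable_comp ν (f := fun z => q.eval z * (starRingEnd ℂ) (q.eval z))
      ((Polynomial.continuous q).mul (Complex.continuous_conj.comp (Polynomial.continuous q)))
  have hint_pq : Integrable (fun θ => φ.eval (E θ) * (starRingEnd ℂ) (q.eval (E θ))) ν :=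
    integrable_comp ν (f := fun z => φ.eval z * (starRingEnd ℂ) (q.eval z))
      ((Polynomial.continuous φ).mul (Complex.continuous_conj.comp (Polynomial.continuous q)))
  have hint_qp : Integrable (fun θ => q.eval (E θ) * (starRingEnd ℂ) (φ.eval (E θ))) ν :=
    integrable_comp ν (f := fun z => q.eval z * (starRingEnd ℂ) (φ.eval z))
      ((Polynomial.continuous q).mul (Complex.continuous_conj.comp (Polynomial.continuous φ)))
  have hint_pp : Integrable (fun θ => φ.eval (E θ) * (starRingEnd ℂ) (φ.eval (E θ))) ν :=
    integrable_comp ν (f := fun z => φ.eval z * (starRingEnd ℂ) (φ.eval z))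
      ((Polynomial.continuous φ).mul (Complex.continuous_conj.comp (Polynomial.continuous φ)))
  have horthq : ∫ θ, φ.eval (E θ) * (starRingEnd ℂ) (q.eval (E θ)) ∂ν = 0 :=
    orth_conj φ N ν horth q hdegq
  have horthq' : ∫ θ, q.eval (E θ) * (starRingEnd ℂ) (φ.eval (E θ)) ∂ν = 0 := by
    have : (fun θ => q.eval (E θ) * (starRingEnd ℂ) (φ.eval (E θ)))
        = fun θ => (starRingEnd ℂ) (φ.eval (E θ) * (starRingEnd ℂ) (q.eval (E θ))) := by
      funext θ; rw [map_mul, Complex.conj_conj]; ring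
    rw [this, integral_conj, horthq, map_zero]
  have heq : ∫ θ, q.eval (E θ) * (starRingEnd ℂ) (q.eval (E θ)) ∂ν
      = 1 + (z0 * (starRingEnd ℂ) z0) *
          ∫ θ, q.eval (E θ) * (starRingEnd ℂ) (q.eval (E θ)) ∂ν := by
    have step : ∫ θ, q.eval (E θ) * (starRingEnd ℂ) (q.eval (E θ)) ∂ν
        = ∫ θ, (φ.eval (E θ) * (starRingEnd ℂ) (φ.eval (E θ))
          + (starRingEnd ℂ) z0 * (φ.eval (E θ) * (starRingEnd ℂ) (q.eval (E θ)))
          + z0 * (q.eval (E θ) * (starRingEnd ℂ) (φ.eval (E θ)))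
          + (z0 * (starRingEnd ℂ) z0) * (q.eval (E θ) * (starRingEnd ℂ) (q.eval (E θ)))) ∂ν :=
      integral_congr_ae (ae_of_all _ hpt)
    refine step.trans ?_
    rw [integral_add (f := fun θ => φ.eval (E θ) * (starRingEnd ℂ) (φ.eval (E θ))
          + (starRingEnd ℂ) z0 * (φ.eval (E θ) * (starRingEnd ℂ) (q.eval (E θ)))
          + z0 * (q.eval (E θ) * (starRingEnd ℂ) (φ.eval (E θ))))
        (g := fun θ => (z0 * (starRingEnd ℂ) z0) * (q.eval (E θ) * (starRingEnd ℂ) (q.eval (E θ))))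
        ((hint_pp.add (hint_pq.const_mul _)).add (hint_qp.const_mul _)) (hint_qq.const_mul _),
      integral_add (f := fun θ => φ.eval (E θ) * (starRingEnd ℂ) (φ.eval (E θ))
          + (starRingEnd ℂ) z0 * (φ.eval (E θ) * (starRingEnd ℂ) (q.eval (E θ))))
        (g := fun θ => z0 * (q.eval (E θ) * (starRingEnd ℂ) (φ.eval (E θ))))
        (hint_pp.add (hint_pq.const_mul _)) (hint_qp.const_mul _),
      integral_add hint_pp (hint_pq.const_mul _),
      integral_const_mul, integral_const_mul, integral_const_mul,
      hnormC, horthq, horthq']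
    ring
  -- pass to real
  have hreal : (fun θ => q.eval (E θ) * (starRingEnd ℂ) (q.eval (E θ)))
      = fun θ => ((‖q.eval (E θ)‖^2 : ℝ) : ℂ) := funext fun θ => mul_conj_self _
  set R : ℝ := ∫ θ, ‖q.eval (E θ)‖^2 ∂ν with hR
  have hRnn : 0 ≤ R := integral_nonneg fun θ => sq_nonneg _
  have hz : z0 * (starRingEnd ℂ) z0 = ((‖z0‖^2 : ℝ) : ℂ) := mul_conj_self z0
  have hcast : (∫ θ, ((‖q.eval (E θ)‖^2 : ℝ) : ℂ) ∂ν) = ((R : ℝ) : ℂ) :=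
    integral_ofReal (𝕜 := ℂ)
  rw [hreal, hz, hcast] at heq
  have heq2 : R = 1 + ‖z0‖^2 * R := by exact_mod_cast heq
  have h1le : (1:ℝ) ≤ ‖z0‖^2 := by nlinarith
  nlinarith

end
section
lemma circleMap_eq_E (θ : ℝ) : circleMap 0 1 θ = E θ := by
  simp [circleMap, E_def]

lemma circle_avg (g : ℂ → ℂ) (hg : DifferentiableOn ℂ g (Metric.closedBall 0 1)) :
    ∫ θ in Set.Ico (0:ℝ) (2*π), g (E θ) = 2 * π * g 0 := by
  have h0 : (0:ℂ) ∈ Metric.ball (0:ℂ) 1 := Metric.mem_ball_self one_pos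
  have key := hg.circleIntegral_sub_inv_smul h0
  rw [circleIntegral] at key
  have hpt : ∀ θ : ℝ, (deriv (circleMap 0 1) θ) • ((circleMap 0 1 θ - 0)⁻¹ • g (circleMap 0 1 θ))
      = Complex.I * g (E θ) := by
    intro θ
    rw [deriv_circleMap, circleMap_eq_E, smul_eq_mul, smul_eq_mul, sub_zero]
    rw [mul_comm (E θ) Complex.I, mul_assoc, ← mul_assoc (E θ), mul_inv_cancel₀ (E_ne_zero θ), one_mul]
  rw [intervalIntegral.integral_congr (fun θ _ => hpt θ)] at key
  rw [intervalIntegral.integral_const_mul] at key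
  have h2π : (0:ℝ) ≤ 2 * π := by positivity
  rw [intervalIntegral.integral_of_le h2π] at key
  have key2 : Complex.I * ∫ θ in Set.Ioc (0:ℝ) (2*π), g (E θ) = Complex.I * (2 * π * g 0) := by
    rw [key, smul_eq_mul]; ring
  have key3 := mul_left_cancel₀ Complex.I_ne_zero key2
  rw [← key3]
  exact setIntegral_congr_set Ico_ae_eq_Ioc

end
section
variable (φ : Polynomial ℂ) (N : ℕ)

/-- weight function -/
def w (θ : ℝ) : ℝ := 1 / (2 * π * ‖φ.eval (E θ)‖ ^ 2)

lemma bsMeasure_eq : bsMeasure φ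
    = (volume.restrict (Set.Ico (0 : ℝ) (2 * π))).withDensity
        (fun θ => ENNReal.ofReal (w φ θ)) := rfl

lemma continuous_w (hnz : ∀ θ : ℝ, φ.eval (E θ) ≠ 0) : Continuous (w φ) := by
  unfold w
  refine continuous_const.div ?_ ?_
  · exact continuous_const.mul
      (((continuous_norm.comp ((Polynomial.continuous φ).comp continuous_E)).pow 2))
  · intro θ
    have h2 : (0:ℝ) < ‖φ.eval (E θ)‖^2 := pow_pos (norm_pos_iff.mpr (hnz θ)) 2
    nlinarith [Real.pi_pos]

lemma bs_finite (hroots : ∀ z : ℂ, φ.eval z = 0 → ‖z‖ < 1) :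
    IsFiniteMeasure (bsMeasure φ) := by
  obtain ⟨z₀, hz₀, hmin⟩ := (isCompact_sphere (0:ℂ) 1).exists_isMinOn
    ⟨1, by simp⟩ (continuous_norm.comp (Polynomial.continuous φ)).continuousOn
  have hz₀ne : φ.eval z₀ ≠ 0 := fun h => by
    have := hroots z₀ h
    rw [mem_sphere_zero_iff_norm.mp hz₀] at this; exact absurd this (lt_irrefl 1)
  set m : ℝ := ‖φ.eval z₀‖ with hm
  have hmpos : 0 < m := norm_pos_iff.mpr hz₀ne
  have hub : ∀ θ : ℝ, w φ θ ≤ 1 / (2 * π * m ^ 2) := by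
    intro θ
    have h1 : m ≤ ‖φ.eval (E θ)‖ := hmin (by
      rw [mem_sphere_zero_iff_norm]; exact E_norm θ)
    have h2 : 0 < 2 * π * m ^ 2 := by positivity
    apply one_div_le_one_div_of_le h2
    have : m^2 ≤ ‖φ.eval (E θ)‖^2 := by nlinarith [norm_nonneg (φ.eval (E θ))]
    nlinarith [Real.pi_pos]
  constructor
  rw [bsMeasure_eq, withDensity_apply _ MeasurableSet.univ, setLIntegral_univ]
  calc ∫⁻ θ, ENNReal.ofReal (w φ θ) ∂(volume.restrict (Set.Ico (0:ℝ) (2*π)))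
      ≤ ∫⁻ _, ENNReal.ofReal (1 / (2 * π * m ^ 2)) ∂(volume.restrict (Set.Ico (0:ℝ) (2*π))) :=
        lintegral_mono fun θ => ENNReal.ofReal_le_ofReal (hub θ)
    _ = ENNReal.ofReal (1 / (2 * π * m ^ 2)) * volume (Set.Ico (0:ℝ) (2*π)) := by
        rw [lintegral_const, Measure.restrict_apply MeasurableSet.univ, Set.univ_inter]
    _ < ⊤ := by
        rw [Real.volume_Ico]
        exact ENNReal.mul_lt_top ENNReal.ofReal_lt_top ENNReal.ofReal_lt_top

lemma bs_integral (hnz : ∀ θ : ℝ, φ.eval (E θ) ≠ 0) (f : ℂ → ℂ) :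
    ∫ θ, f (E θ) ∂(bsMeasure φ)
      = ∫ θ in Set.Ico (0:ℝ) (2*π), (w φ θ) • f (E θ) := by
  rw [bsMeasure_eq]
  have hmeas : Measurable fun θ => (w φ θ).toNNReal :=
    (continuous_w φ hnz).measurable.real_toNNReal
  rw [show (fun θ => ENNReal.ofReal (w φ θ))
      = fun θ => (((w φ θ).toNNReal : NNReal) : ENNReal) from rfl,
    integral_withDensity_eq_integral_smul hmeas]
  refine setIntegral_congr_fun measurableSet_Ico fun θ _ => ?_
  have hw0 : 0 ≤ w φ θ := by
    unfold w
    positivity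
  rw [NNReal.smul_def, Real.coe_toNNReal _ hw0]

lemma bs_moment (hnd : φ.natDegree = N) (haN : φ.coeff N ≠ 0)
    (hnz : ∀ θ : ℝ, φ.eval (E θ) ≠ 0)
    (hb : ∀ z : ℂ, ‖z‖ ≤ 1 → (phs φ N).eval z ≠ 0)
    (m : ℕ) (hm : m ≤ N) :
    ∫ θ, φ.eval (E θ) * E (-(m * θ)) ∂(bsMeasure φ)
      = if m = N then ((starRingEnd ℂ) (φ.coeff N))⁻¹ else 0 := by
  have h2πne : ((2 * π : ℝ) : ℂ) ≠ 0 := by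
    simp only [ne_eq, Complex.ofReal_eq_zero]
    positivity
  set g : ℂ → ℂ := fun z => z ^ (N - m) * ((phs φ N).eval z)⁻¹ with hg
  have h1 : ∫ θ, φ.eval (E θ) * E (-(m * θ)) ∂(bsMeasure φ)
      = ∫ θ, (fun z => φ.eval z * ((starRingEnd ℂ) z) ^ m) (E θ) ∂(bsMeasure φ) := by
    congr 1; funext θ; rw [E_neg_nat]
  rw [h1, bs_integral φ hnz (fun z => φ.eval z * ((starRingEnd ℂ) z) ^ m)]
  have hpt : ∀ θ ∈ Set.Ico (0:ℝ) (2*π),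
      (w φ θ) • ((fun z => φ.eval z * ((starRingEnd ℂ) z) ^ m) (E θ))
        = ((2 * π : ℝ) : ℂ)⁻¹ * g (E θ) := by
    intro θ _
    show (w φ θ) • (φ.eval (E θ) * ((starRingEnd ℂ) (E θ)) ^ m) = ((2 * π : ℝ) : ℂ)⁻¹ * g (E θ)
    set a : ℂ := φ.eval (E θ) with ha
    have hane : a ≠ 0 := hnz θ
    have hcne : (starRingEnd ℂ) a ≠ 0 := by simpa using hane
    have hPne : (phs φ N).eval (E θ) ≠ 0 := hb _ (le_of_eq (E_norm θ))
    have hP : (phs φ N).eval (E θ) = E (N * θ) * (starRingEnd ℂ) a := phs_eval_E φ N hnd θ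
    have hwc : ((w φ θ : ℝ) : ℂ) = (((2 * π : ℝ) : ℂ) * (a * (starRingEnd ℂ) a))⁻¹ := by
      rw [show (w φ θ) = 1 / (2 * π * ‖a‖^2) from rfl, one_div, Complex.ofReal_inv,
        Complex.ofReal_mul, ← mul_conj_self a]
    rw [Complex.real_smul, hwc, ← E_neg_nat]
    simp only [hg]
    rw [hP]
    have hEpow : (E θ) ^ (N - m) = E (N * θ) * E (-(m * θ)) := by
      rw [E_pow, ← E_add]
      congr 1
      push_cast [Nat.cast_sub hm]
      ring
    rw [hEpow]
    field_simp [hane, hcne, E_ne_zero]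
  rw [setIntegral_congr_fun measurableSet_Ico hpt, integral_const_mul]
  have hdiff : DifferentiableOn ℂ g (Metric.closedBall 0 1) := by
    refine DifferentiableOn.mul (differentiable_pow (N - m)).differentiableOn ?_
    refine DifferentiableOn.inv ((phs φ N).differentiable.differentiableOn) ?_
    intro z hz
    exact hb z (by simpa [Metric.mem_closedBall, dist_eq_norm] using hz)
  rw [circle_avg g hdiff]
  have hg0 : g 0 = if m = N then ((starRingEnd ℂ) (φ.coeff N))⁻¹ else 0 := by
    simp only [hg, phs_eval_zero]
    by_cases hmN : m = N
    · simp [hmN]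
    · have : N - m ≠ 0 := by omega
      simp [hmN, zero_pow this]
  have hc : (((2 * π : ℝ) : ℂ))⁻¹ * (2 * (π:ℂ)) = 1 := by
    rw [show ((2 * π : ℝ) : ℂ) = 2 * (π:ℂ) by push_cast; ring]
    exact inv_mul_cancel₀ (by rw [show (2 * (π:ℂ)) = ((2 * π : ℝ) : ℂ) by push_cast; ring]; exact h2πne)
  rw [hg0, ← mul_assoc, hc, one_mul]

end
section
variable (φ : Polynomial ℂ) (N : ℕ) (ν : Measure ℝ) [IsFiniteMeasure ν]

lemma integrable_conj_poly_exp (P : Polynomial ℂ) (j : ℕ) :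
    Integrable (fun θ => (starRingEnd ℂ) (P.eval (E θ)) * E (j * θ)) ν := by
  have h : (fun θ => (starRingEnd ℂ) (P.eval (E θ)) * E (j * θ))
      = fun θ => (fun z => (starRingEnd ℂ) (P.eval z) * z ^ j) (E θ) := by
    funext θ
    simp only [E_pow]
  rw [h]
  exact integrable_comp ν ((Complex.continuous_conj.comp (Polynomial.continuous P)).mul
    (continuous_pow j))

/-- the value `M = ∫ φ e^{-iNθ} dν` from the normalization -/
lemma M_value (hnd : φ.natDegree = N) (haN : φ.coeff N ≠ 0)
    (horth : ∀ m : ℕ, m < N → ∫ θ, φ.eval (E θ) * E (-(m * θ)) ∂ν = 0)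
    (hnormC : ∫ θ, φ.eval (E θ) * (starRingEnd ℂ) (φ.eval (E θ)) ∂ν = 1) :
    ∫ θ, φ.eval (E θ) * E (-(N * θ)) ∂ν = ((starRingEnd ℂ) (φ.coeff N))⁻¹ := by
  have hex : ∀ θ : ℝ, φ.eval (E θ) * (starRingEnd ℂ) (φ.eval (E θ))
      = ∑ j ∈ Finset.range (N+1), (starRingEnd ℂ) (φ.coeff j) *
          (φ.eval (E θ) * E (-(j * θ))) := by
    intro θ
    conv_lhs => rw [show (starRingEnd ℂ) (φ.eval (E θ))
      = ∑ j ∈ Finset.range (N+1), (starRingEnd ℂ) (φ.coeff j) * E (-(j * θ)) by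
        rw [eval_E φ (show φ.natDegree < N+1 by omega) θ, map_sum]
        exact Finset.sum_congr rfl fun j _ => by rw [map_mul, E_conj]]
    rw [Finset.mul_sum]
    exact Finset.sum_congr rfl fun j _ => by ring
  have h2 : ∫ θ, φ.eval (E θ) * (starRingEnd ℂ) (φ.eval (E θ)) ∂ν
      = ∑ j ∈ Finset.range (N+1), (starRingEnd ℂ) (φ.coeff j) *
          ∫ θ, φ.eval (E θ) * E (-(j * θ)) ∂ν := by
    rw [integral_congr_ae (ae_of_all _ hex),
      integral_finset_sum _ fun j _ => (integrable_poly_exp ν φ j).const_mul _]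
    exact Finset.sum_congr rfl fun j _ => integral_const_mul _ _
  rw [hnormC] at h2
  have h3 : ∑ j ∈ Finset.range (N+1), (starRingEnd ℂ) (φ.coeff j) *
      ∫ θ, φ.eval (E θ) * E (-(j * θ)) ∂ν
      = (starRingEnd ℂ) (φ.coeff N) * ∫ θ, φ.eval (E θ) * E (-(N * θ)) ∂ν := by
    refine Finset.sum_eq_single_of_mem N (Finset.self_mem_range_succ N) fun j hj hjne => ?_
    have hjN : j < N := by
      have := Finset.mem_range.mp hj; omega
    rw [horth j hjN, mul_zero]
  rw [h3] at h2
  have hc : (starRingEnd ℂ) (φ.coeff N) ≠ 0 := by simpa using haN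
  field_simp
  rw [mul_comm]
  exact h2.symm

lemma machine (A Cp : Polynomial ℂ)
    (hnd : φ.natDegree = N)
    (hA : A.natDegree ≤ N) (hC : Cp.natDegree ≤ N) (k : ℕ) (hk : k ≤ N)
    (hid : A * phs φ N + Cp * φ = Polynomial.X ^ (N - k)) (M : ℂ)
    (horth : ∀ m : ℕ, m < N → ∫ θ, φ.eval (E θ) * E (-(m * θ)) ∂ν = 0)
    (hM : ∫ θ, φ.eval (E θ) * E (-(N * θ)) ∂ν = M) :
    ∫ θ, E (-(k * θ)) ∂ν
      = A.coeff N * (starRingEnd ℂ) M + Cp.coeff 0 * M := by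
  have hpt : ∀ θ : ℝ, E (-(k * θ))
      = (∑ j ∈ Finset.range (N+1), A.coeff j * ((starRingEnd ℂ) (φ.eval (E θ)) * E (j * θ)))
        + ∑ j ∈ Finset.range (N+1), Cp.coeff (N - j) * (φ.eval (E θ) * E (-(j * θ))) := by
    intro θ
    have h1 := congrArg (Polynomial.eval (E θ)) hid
    rw [Polynomial.eval_add, Polynomial.eval_mul, Polynomial.eval_mul,
      Polynomial.eval_pow, Polynomial.eval_X, phs_eval_E φ N hnd θ] at h1
    -- multiply by E(-(N θ))
    have h2 : E (-(N * θ)) * (A.eval (E θ) * (E (N * θ) * (starRingEnd ℂ) (φ.eval (E θ)))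
        + Cp.eval (E θ) * φ.eval (E θ)) = E (-(N * θ)) * E θ ^ (N - k) := by rw [h1]
    have hENcancel : E (-(N * θ)) * E (N * θ) = 1 := by
      rw [← E_add]; simp [E_zero]
    have hrhs : E (-(N * θ)) * E θ ^ (N - k) = E (-(k * θ)) := by
      rw [E_pow, ← E_add]
      congr 1
      push_cast [Nat.cast_sub hk]
      ring
    rw [hrhs] at h2
    rw [← h2]
    have hAe := eval_E A (show A.natDegree < N+1 by omega) θ
    have hCe := eval_E Cp (show Cp.natDegree < N+1 by omega) θ
    rw [hAe, hCe, mul_add]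
    congr 1
    · rw [Finset.sum_mul, Finset.mul_sum]
      refine Finset.sum_congr rfl fun j hj => ?_
      have : E (-(↑N * θ)) * (A.coeff j * E (↑j * θ) * (E (↑N * θ) * (starRingEnd ℂ) (φ.eval (E θ))))
          = (E (-(↑N * θ)) * E (↑N * θ)) * (A.coeff j * ((starRingEnd ℂ) (φ.eval (E θ)) * E (↑j * θ))) := by
        ring
      rw [this, hENcancel, one_mul]
    · rw [Finset.sum_mul, Finset.mul_sum]
      rw [← Finset.sum_range_reflect]
      refine Finset.sum_congr rfl fun j hj => ?_
      have hj' : j ≤ N := by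
        have := Finset.mem_range.mp hj; omega
      have h4 : N + 1 - 1 - j = N - j := by omega
      rw [h4]
      have hcast : ((N - j : ℕ) : ℝ) = (N : ℝ) - j := by
        push_cast [Nat.cast_sub hj']; ring
      have hE5 : E (-(↑N * θ)) * E (↑(N - j) * θ) = E (-(↑j * θ)) := by
        rw [← E_add]
        congr 1
        rw [hcast]
        ring
      calc E (-(↑N * θ)) * (Cp.coeff (N - j) * E (↑(N - j) * θ) * φ.eval (E θ))
          = Cp.coeff (N - j) * ((E (-(↑N * θ)) * E (↑(N - j) * θ)) * φ.eval (E θ)) := by ring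
        _ = Cp.coeff (N - j) * (φ.eval (E θ) * E (-(↑j * θ))) := by rw [hE5]; ring
  rw [integral_congr_ae (ae_of_all _ hpt)]
  have hintA : ∀ j ∈ Finset.range (N+1), Integrable
      (fun θ => A.coeff j * ((starRingEnd ℂ) (φ.eval (E θ)) * E (j * θ))) ν :=
    fun j _ => (integrable_conj_poly_exp ν φ j).const_mul _
  have hintC : ∀ j ∈ Finset.range (N+1), Integrable
      (fun θ => Cp.coeff (N - j) * (φ.eval (E θ) * E (-(j * θ)))) ν :=
    fun j _ => (integrable_poly_exp ν φ j).const_mul _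
  rw [integral_add (integrable_finset_sum _ hintA) (integrable_finset_sum _ hintC),
    integral_finset_sum _ hintA, integral_finset_sum _ hintC]
  have hconjint : ∀ j : ℕ, ∫ θ, (starRingEnd ℂ) (φ.eval (E θ)) * E (j * θ) ∂ν
      = (starRingEnd ℂ) (∫ θ, φ.eval (E θ) * E (-(j * θ)) ∂ν) := by
    intro j
    rw [← integral_conj]
    congr 1
    funext θ
    rw [map_mul, E_conj, neg_neg]
  have hAsum : ∑ j ∈ Finset.range (N+1),
      ∫ θ, A.coeff j * ((starRingEnd ℂ) (φ.eval (E θ)) * E (j * θ)) ∂ν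
      = A.coeff N * (starRingEnd ℂ) M := by
    have e1 : ∀ j ∈ Finset.range (N+1),
        ∫ θ, A.coeff j * ((starRingEnd ℂ) (φ.eval (E θ)) * E (j * θ)) ∂ν
          = A.coeff j * (starRingEnd ℂ) (∫ θ, φ.eval (E θ) * E (-(j * θ)) ∂ν) :=
      fun j _ => by rw [integral_const_mul, hconjint j]
    rw [Finset.sum_congr rfl e1,
      Finset.sum_eq_single_of_mem N (Finset.self_mem_range_succ N) (fun j hj hjne => by
        have hjN : j < N := by
          have := Finset.mem_range.mp hj; omega
        rw [horth j hjN, map_zero, mul_zero]), hM]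
  have hCsum : ∑ j ∈ Finset.range (N+1),
      ∫ θ, Cp.coeff (N - j) * (φ.eval (E θ) * E (-(j * θ))) ∂ν
      = Cp.coeff 0 * M := by
    have e1 : ∀ j ∈ Finset.range (N+1),
        ∫ θ, Cp.coeff (N - j) * (φ.eval (E θ) * E (-(j * θ))) ∂ν
          = Cp.coeff (N - j) * ∫ θ, φ.eval (E θ) * E (-(j * θ)) ∂ν :=
      fun j _ => integral_const_mul _ _
    rw [Finset.sum_congr rfl e1,
      Finset.sum_eq_single_of_mem N (Finset.self_mem_range_succ N) (fun j hj hjne => by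
        have hjN : j < N := by
          have := Finset.mem_range.mp hj; omega
        rw [horth j hjN, mul_zero]), hM, Nat.sub_self]
  rw [hAsum, hCsum]

end
section
variable (φ : Polynomial ℂ) (N : ℕ)

lemma phs_ne_on_ball (haN : φ.coeff N ≠ 0) (hnd : φ.natDegree = N)
    (hroots : ∀ z : ℂ, φ.eval z = 0 → ‖z‖ < 1) :
    ∀ z : ℂ, ‖z‖ ≤ 1 → (phs φ N).eval z ≠ 0 := by
  intro z hz
  rcases eq_or_ne z 0 with rfl | hz0
  · rw [phs_eval_zero]
    simpa using haN
  · rw [phs_eval_of_ne_zero φ N hz0 hnd]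
    have hw : ((starRingEnd ℂ) z)⁻¹ ≠ 0 := by
      simp [hz0]
    have hwn : (1:ℝ) ≤ ‖((starRingEnd ℂ) z)⁻¹‖ := by
      rw [norm_inv, RCLike.norm_conj]
      rw [le_inv_comm₀]
      · simpa using hz
      · norm_num
      · exact norm_pos_iff.mpr hz0
    have hφw : φ.eval (((starRingEnd ℂ) z)⁻¹) ≠ 0 := by
      intro h
      exact absurd (hroots _ h) (not_lt.mpr hwn)
    intro h
    rcases mul_eq_zero.mp h with h | h
    · exact pow_ne_zero N hz0 h
    · exact hφw (by simpa using h)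

lemma exists_bezout (haN : φ.coeff N ≠ 0) (hnd : φ.natDegree = N)
    (hroots : ∀ z : ℂ, φ.eval z = 0 → ‖z‖ < 1) (k : ℕ) :
    ∃ A Cp : Polynomial ℂ, A.natDegree ≤ N ∧ Cp.natDegree ≤ N ∧
      A * phs φ N + Cp * φ = Polynomial.X ^ (N - k) := by
  have hφne : φ ≠ 0 := fun h => haN (by simp [h])
  have hb := phs_ne_on_ball φ N haN hnd hroots
  -- gcd is a nonzero constant
  set d := EuclideanDomain.gcd φ (phs φ N) with hd
  have hdne : d ≠ 0 := by
    intro h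
    rw [hd, EuclideanDomain.gcd_eq_zero_iff] at h
    exact hφne h.1
  have hdeg : d.degree ≤ 0 := by
    by_contra hdeg
    push_neg at hdeg
    obtain ⟨z, hz⟩ := Complex.exists_root hdeg
    have hzφ : φ.eval z = 0 := by
      obtain ⟨e, he⟩ := EuclideanDomain.gcd_dvd_left φ (phs φ N)
      rw [he, Polynomial.eval_mul, hz, zero_mul]
    have hzp : (phs φ N).eval z = 0 := by
      obtain ⟨e, he⟩ := EuclideanDomain.gcd_dvd_right φ (phs φ N)
      rw [he, Polynomial.eval_mul, hz, zero_mul]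
    exact hb z (le_of_lt (hroots z hzφ)) hzp
  obtain ⟨c, hc⟩ : ∃ c : ℂ, d = Polynomial.C c := ⟨d.coeff 0, Polynomial.eq_C_of_degree_le_zero hdeg⟩
  have hcne : c ≠ 0 := fun h => hdne (by rw [hc, h, map_zero])
  have hbez := EuclideanDomain.gcd_eq_gcd_ab φ (phs φ N)
  rw [← hd, hc] at hbez
  -- hbez : C c = φ * gcdA + phs * gcdB
  set T : Polynomial ℂ := Polynomial.X ^ (N - k) with hT
  set U : Polynomial ℂ := EuclideanDomain.gcdB φ (phs φ N) * Polynomial.C c⁻¹ * T with hU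
  set V : Polynomial ℂ := EuclideanDomain.gcdA φ (phs φ N) * Polynomial.C c⁻¹ * T with hV
  have hUV : U * phs φ N + V * φ = T := by
    rw [hU, hV]
    have : (Polynomial.C c) * (Polynomial.C c⁻¹ * T)
        = (φ * EuclideanDomain.gcdA φ (phs φ N) + phs φ N * EuclideanDomain.gcdB φ (phs φ N))
          * (Polynomial.C c⁻¹ * T) := by rw [← hbez]
    calc EuclideanDomain.gcdB φ (phs φ N) * Polynomial.C c⁻¹ * T * phs φ N
          + EuclideanDomain.gcdA φ (phs φ N) * Polynomial.C c⁻¹ * T * φ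
        = (φ * EuclideanDomain.gcdA φ (phs φ N) + phs φ N * EuclideanDomain.gcdB φ (phs φ N))
          * (Polynomial.C c⁻¹ * T) := by ring
      _ = (Polynomial.C c) * (Polynomial.C c⁻¹ * T) := this.symm
      _ = T := by
          rw [← mul_assoc, ← Polynomial.C_mul, mul_inv_cancel₀ hcne, Polynomial.C_1, one_mul]
  -- now reduce U mod (monic multiple of φ)
  have hmon : (φ * Polynomial.C φ.leadingCoeff⁻¹).Monic := Polynomial.monic_mul_leadingCoeff_inv hφne
  set A : Polynomial ℂ := U %ₘ (φ * Polynomial.C φ.leadingCoeff⁻¹) with hA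
  set qu : Polynomial ℂ := U /ₘ (φ * Polynomial.C φ.leadingCoeff⁻¹) with hqu
  have hUdecomp : A + (φ * Polynomial.C φ.leadingCoeff⁻¹) * qu = U :=
    Polynomial.modByMonic_add_div U _
  set Cp : Polynomial ℂ := V + qu * Polynomial.C φ.leadingCoeff⁻¹ * phs φ N with hCp
  have hkey : A * phs φ N + Cp * φ = T := by
    rw [hCp, ← hUV, ← hUdecomp]
    ring
  have hdegA : A.degree < (N : WithBot ℕ) := by
    have h := Polynomial.degree_modByMonic_lt U hmon
    rwa [Polynomial.degree_mul_leadingCoeff_inv φ hφne,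
      Polynomial.degree_eq_natDegree hφne, hnd] at h
  have hAled : A.natDegree ≤ N :=
    Polynomial.natDegree_le_iff_degree_le.mpr (le_of_lt hdegA)
  have hCple : Cp.natDegree ≤ N := by
    rcases eq_or_ne Cp 0 with h0 | h0
    · simp [h0]
    have hCpφ : Cp * φ = T - A * phs φ N := by
      rw [← hkey]; ring
    have h1 : (Cp * φ).natDegree = Cp.natDegree + N := by
      rw [Polynomial.natDegree_mul h0 hφne, hnd]
    have h2 : (Cp * φ).natDegree ≤ 2 * N := by
      rw [hCpφ]
      refine le_trans (Polynomial.natDegree_sub_le _ _) (max_le ?_ ?_)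
      · rw [hT, Polynomial.natDegree_X_pow]
        omega
      · refine le_trans (Polynomial.natDegree_mul_le) ?_
        have := phs_natDegree_le φ N
        omega
    omega
  exact ⟨A, Cp, hAled, hCple, hkey⟩

end

end BSaux

open BSaux

/-- Bernstein–Szegő approximation: `μ_N = dθ/(2π|φ_N|²)` is a probability measure whose
trigonometric moments of order up to `N` coincide with those of `μ`. -/
theorem bernstein_szego_moments
    (μ : Measure ℝ) [IsProbabilityMeasure μ]
    (hsupp : μ (Set.Ico (0 : ℝ) (2 * π))ᶜ = 0)
    (hinf : HasInfiniteSupport μ)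
    (N : ℕ) (φ : Polynomial ℂ)
    (hφ : IsOrthonormalPolynomial μ N φ) :
    (∀ θ : ℝ, φ.eval (Complex.exp (θ * Complex.I)) ≠ 0) ∧
    IsProbabilityMeasure (bsMeasure φ) ∧
    ∀ k : ℤ, |k| ≤ (N : ℤ) →
      ∫ θ : ℝ, Complex.exp (-((k : ℝ) * θ : ℝ) * Complex.I) ∂(bsMeasure φ)
        = ∫ θ : ℝ, Complex.exp (-((k : ℝ) * θ : ℝ) * Complex.I) ∂μ := by
  obtain ⟨hdeg, him, hre, horthμ', hnormμ⟩ := hφ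
  have hnd : φ.natDegree = N := Polynomial.natDegree_eq_of_degree_eq_some hdeg
  have haN : φ.coeff N ≠ 0 := by
    rw [← hnd, Polynomial.coeff_natDegree]
    intro h
    rw [h] at hre
    simp at hre
  have horthμ : ∀ m : ℕ, m < N → ∫ θ, φ.eval (E θ) * E (-(m * θ)) ∂μ = 0 := by
    intro m hm
    simpa only [E_def, Complex.ofReal_neg] using horthμ' m hm
  have hnormE : ∫ θ, ‖φ.eval (E θ)‖^2 ∂μ = 1 := by
    simpa only [E_def] using hnormμ
  have hnormC : ∫ θ, φ.eval (E θ) * (starRingEnd ℂ) (φ.eval (E θ)) ∂μ = 1 := by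
    rw [integral_congr_ae (ae_of_all _ fun θ => mul_conj_self (φ.eval (E θ)))]
    have hcast : ∫ θ, ((‖φ.eval (E θ)‖^2 : ℝ) : ℂ) ∂μ
        = ((∫ θ, ‖φ.eval (E θ)‖^2 ∂μ : ℝ) : ℂ) := integral_ofReal (𝕜 := ℂ)
    rw [hcast, hnormE, Complex.ofReal_one]
  have hroots : ∀ z : ℂ, φ.eval z = 0 → ‖z‖ < 1 :=
    roots_in_disk φ N μ haN hnd horthμ hnormC
  have hnz : ∀ θ : ℝ, φ.eval (E θ) ≠ 0 := fun θ h => by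
    have h2 := hroots _ h
    rw [E_norm] at h2
    exact lt_irrefl 1 h2
  have goal1 : ∀ θ : ℝ, φ.eval (Complex.exp (θ * Complex.I)) ≠ 0 := fun θ => by
    rw [← E_def]; exact hnz θ
  have hb := phs_ne_on_ball φ N haN hnd hroots
  haveI hfin : IsFiniteMeasure (bsMeasure φ) := bs_finite φ hroots
  have horthN : ∀ m : ℕ, m < N → ∫ θ, φ.eval (E θ) * E (-(m * θ)) ∂(bsMeasure φ) = 0 := by
    intro m hm
    rw [bs_moment φ N hnd haN hnz hb m (le_of_lt hm), if_neg (by omega)]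
  have hMN : ∫ θ, φ.eval (E θ) * E (-(N * θ)) ∂(bsMeasure φ)
      = ((starRingEnd ℂ) (φ.coeff N))⁻¹ := by
    rw [bs_moment φ N hnd haN hnz hb N le_rfl, if_pos rfl]
  have hMμ := M_value φ N μ hnd haN horthμ hnormC
  have key : ∀ k : ℕ, k ≤ N →
      ∫ θ, E (-(k * θ)) ∂(bsMeasure φ) = ∫ θ, E (-(k * θ)) ∂μ := by
    intro k hk
    obtain ⟨A, Cp, hA, hC, hid⟩ := exists_bezout φ N haN hnd hroots k
    rw [machine φ N (bsMeasure φ) A Cp hnd hA hC k hk hid _ horthN hMN,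
        machine φ N μ A Cp hnd hA hC k hk hid _ horthμ hMμ]
  -- probability
  have hone : ∫ θ, (1:ℂ) ∂(bsMeasure φ) = ∫ θ, (1:ℂ) ∂μ := by
    have h0 := key 0 (Nat.zero_le N)
    have hE0 : ∀ θ : ℝ, E (-((0:ℕ) * θ)) = 1 := fun θ => by
      norm_num [E_zero]
    rwa [integral_congr_ae (ae_of_all _ hE0), integral_congr_ae (ae_of_all _ hE0)] at h0
  have hbs1 : ∫ θ, (1:ℂ) ∂(bsMeasure φ) = (((bsMeasure φ) Set.univ).toReal : ℂ) := by
    rw [integral_const, Complex.real_smul, mul_one, measureReal_def]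
  have hμ1 : ∫ θ, (1:ℂ) ∂μ = 1 := by
    rw [integral_const, probReal_univ, one_smul]
  have h2 : (((bsMeasure φ) Set.univ).toReal : ℂ) = 1 := by
    rw [← hbs1, hone, hμ1]
  have hprob : IsProbabilityMeasure (bsMeasure φ) := by
    constructor
    rw [← ENNReal.toReal_eq_one_iff]
    exact_mod_cast h2
  refine ⟨goal1, hprob, ?_⟩
  intro k hk
  rcases le_or_gt 0 k with hk0 | hk0
  · obtain ⟨m, rfl⟩ := Int.eq_ofNat_of_zero_le hk0
    have hm : m ≤ N := by
      rw [abs_of_nonneg (by positivity : (0:ℤ) ≤ ((m:ℕ):ℤ))] at hk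
      exact_mod_cast hk
    simp only [Int.cast_natCast, ← Complex.ofReal_neg, ← E_def]
    exact key m hm
  · obtain ⟨m, rfl⟩ := Int.exists_eq_neg_ofNat (le_of_lt hk0)
    have hm : m ≤ N := by
      rw [abs_neg, abs_of_nonneg (by positivity : (0:ℤ) ≤ ((m:ℕ):ℤ))] at hk
      exact_mod_cast hk
    have h4 : ∀ (ν : Measure ℝ), ∫ θ, E ((m:ℝ) * θ) ∂ν
        = (starRingEnd ℂ) (∫ θ, E (-((m:ℝ) * θ)) ∂ν) := fun ν => by
      rw [← integral_conj]
      congr 1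
      funext θ
      rw [E_conj, neg_neg]
    simp only [Int.cast_neg, Int.cast_natCast, neg_mul, Complex.ofReal_neg, neg_neg, ← E_def]
    rw [h4, h4, key m hm]
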